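/- Let X be a topological vector space and Y ⊆ X a closed subspace. There exists a continuous convex function d : X → [0,∞) with d⁻¹(0) = Y if and only if there exists an open convex set V ⊆ X such that ⋂_{ε>0} εV = Y. -/

import Mathlib

open Pointwise

lemma smul_subset_smul_of_convex {X : Type*} [AddCommGroup X] [Module ℝ X]
    {V : Set X} (hV : Convex ℝ V) (h0 : (0:X) ∈ V) {r ε : ℝ} (hr : 0 < r) (hrε : r ≤ ε) :
    r • V ⊆ ε • V := by
  rintro x ⟨v, hv, rfl⟩
  have hε : 0 < ε := hr.trans_le hrε
  refine ⟨(r/ε) • v, ?_, ?_⟩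
  · have h1 : r/ε ≤ 1 := (div_le_one hε).2 hrε
    have := hV hv h0 (le_of_lt (div_pos hr hε)) (by linarith : (0:ℝ) ≤ 1 - r/ε) (by ring)
    simpa using this
  · show ε • ((r/ε) • v) = r • v
    rw [smul_smul, mul_div_cancel₀ _ hε.ne']

theorem stmt_11 {X : Type*} [AddCommGroup X] [Module ℝ X] [TopologicalSpace X]
    [IsTopologicalAddGroup X] [ContinuousSMul ℝ X]
    (Y : Submodule ℝ X) (hYclosed : IsClosed (Y : Set X)) :
    (∃ d : X → ℝ, Continuous d ∧ ConvexOn ℝ Set.univ d ∧ (∀ x, 0 ≤ d x) ∧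
        {x | d x = 0} = (Y : Set X)) ↔
    (∃ V : Set X, IsOpen V ∧ Convex ℝ V ∧ (⋂ ε > (0:ℝ), ε • V) = (Y : Set X)) := by
  constructor
  · rintro ⟨d, hdc, hdconv, hd0, hdY⟩
    have hd0' : d 0 = 0 := by
      have : (0:X) ∈ {x | d x = 0} := by rw [hdY]; exact Y.zero_mem
      exact this
    refine ⟨{x | d x < 1}, (isOpen_lt hdc continuous_const), ?_, ?_⟩
    · have := hdconv.convex_lt 1
      convert this using 1
      ext x; simp
    · ext x
      simp only [Set.mem_iInter]
      constructor
      · intro hx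
        have key : ∀ ε : ℝ, 0 < ε → ε ≤ 1 → d x < ε := by
          intro ε hε hε1
          obtain ⟨v, hv, rfl⟩ := hx ε hε
          have := hdconv.2 (Set.mem_univ v) (Set.mem_univ (0:X)) hε.le
            (by linarith : (0:ℝ) ≤ 1 - ε) (by ring)
          simp only [smul_zero, add_zero, hd0', mul_zero] at this
          calc d (ε • v) ≤ ε * d v := this
            _ < ε * 1 := by exact mul_lt_mul_of_pos_left hv hε
            _ = ε := mul_one ε
        have hdx : d x ≤ 0 := by
          by_contra h
          push_neg at h
          have h1 := key (min (d x) 1) (lt_min h one_pos) (min_le_right _ _)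
          exact absurd h1 (not_lt.2 (min_le_left _ _))
        have : d x = 0 := le_antisymm hdx (hd0 x)
        rw [← hdY]; exact this
      · intro hy ε hε
        refine ⟨ε⁻¹ • x, ?_, ?_⟩
        · have : ε⁻¹ • x ∈ (Y : Set X) := Y.smul_mem _ hy
          rw [← hdY] at this
          simp only [Set.mem_setOf_eq] at this ⊢
          rw [this]; exact one_pos
        · show ε • (ε⁻¹ • x) = x
          rw [smul_smul, mul_inv_cancel₀ hε.ne', one_smul]
  · rintro ⟨V, hVopen, hVconv, hVY⟩
    have h0V : (0:X) ∈ V := by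
      have : (0:X) ∈ ⋂ ε > (0:ℝ), ε • V := by rw [hVY]; exact Y.zero_mem
      have h1 := Set.mem_iInter.1 this 1
      have := Set.mem_iInter.1 h1 one_pos
      simpa using this
    have hnhds : V ∈ nhds (0:X) := hVopen.mem_nhds h0V
    have habs : Absorbent ℝ V := absorbent_nhds_zero hnhds
    refine ⟨gauge V, continuous_gauge hVconv hnhds, ?_, gauge_nonneg, ?_⟩
    · refine ⟨convex_univ, fun x _ y _ a b ha hb hab => ?_⟩
      calc gauge V (a • x + b • y) ≤ gauge V (a • x) + gauge V (b • y) :=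
            gauge_add_le hVconv habs _ _
        _ = a * gauge V x + b * gauge V y := by
            rw [gauge_smul_of_nonneg ha, gauge_smul_of_nonneg hb]; rfl
    · rw [← hVY]
      ext x
      simp only [Set.mem_setOf_eq, Set.mem_iInter]
      constructor
      · intro hx ε hε
        have : gauge V x < ε := by rw [hx]; exact hε
        obtain ⟨r, hr0, hrε, hxr⟩ := exists_lt_of_gauge_lt habs this
        exact smul_subset_smul_of_convex hVconv h0V hr0 hrε.le hxr
      · intro hx
        refine le_antisymm ?_ (gauge_nonneg x)
        refine le_of_forall_pos_le_add fun ε hε => ?_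
        simpa using gauge_le_of_mem hε.le (hx ε hε)
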